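/- Let G be a directed acyclic graph on the variables (S, A, S') in which every next-step vertex S'_j has all of its parents among the current-step vertices (S, A) and has no children, and no current-step vertex has a parent among the next-step vertices. If a full-support joint probability mass function p on (S, A, S') is compatible with G and faithful to G, then for every current-step vertex X_i ∈ (S, A) and every next-step vertex S'_j: X_i is a parent of S'_j in G if and only if the conditional independence X_i ⊥_p S'_j | ((S, A) \ {X_i}) fails. -/

import Mathlib

open Finset

noncomputable section

/-- Marginal probability that a configuration agrees with `x` on the coordinates in `E`. -/
def marg {V : Type*} [Fintype V] [DecidableEq V] {val : V → Type*}
    [∀ v, Fintype (val v)] [∀ v, DecidableEq (val v)]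
    (p : (∀ v, val v) → ℝ) (E : Finset V) (x : ∀ v, val v) : ℝ :=
  ∑ y : ∀ v, val v, if ∀ v ∈ E, y v = x v then p y else 0

/-- Conditional probability of the value of coordinate `v` given the values of `P`. -/
def condP {V : Type*} [Fintype V] [DecidableEq V] {val : V → Type*}
    [∀ v, Fintype (val v)] [∀ v, DecidableEq (val v)]
    (p : (∀ v, val v) → ℝ) (v : V) (P : Finset V) (x : ∀ v, val v) : ℝ :=
  marg p (insert v P) x / marg p P x

/-- Conditional independence X ⊥ Y | Z, in cross-multiplied form. -/
def CondIndep {V : Type*} [Fintype V] [DecidableEq V] {val : V → Type*}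
    [∀ v, Fintype (val v)] [∀ v, DecidableEq (val v)]
    (p : (∀ v, val v) → ℝ) (X Y Z : Finset V) : Prop :=
  ∀ x : ∀ v, val v,
    marg p (X ∪ Y ∪ Z) x * marg p Z x = marg p (X ∪ Z) x * marg p (Y ∪ Z) x

/-- Variables of an FMDP: states, actions, next states. -/
abbrev FVar (ns na : ℕ) := Fin ns ⊕ (Fin na ⊕ Fin ns)

/-- Value types of FMDP variables. -/
def fv {ns na : ℕ} (Sv : Fin ns → Type) (Av : Fin na → Type) : FVar ns na → Type :=
  Sum.elim Sv (Sum.elim Av Sv)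

instance {ns na : ℕ} (Sv : Fin ns → Type) (Av : Fin na → Type)
    [∀ i, Fintype (Sv i)] [∀ j, Fintype (Av j)] : ∀ v, Fintype (fv Sv Av v)
  | .inl i => inferInstanceAs (Fintype (Sv i))
  | .inr (.inl j) => inferInstanceAs (Fintype (Av j))
  | .inr (.inr k) => inferInstanceAs (Fintype (Sv k))

instance {ns na : ℕ} (Sv : Fin ns → Type) (Av : Fin na → Type)
    [∀ i, DecidableEq (Sv i)] [∀ j, DecidableEq (Av j)] : ∀ v, DecidableEq (fv Sv Av v)
  | .inl i => inferInstanceAs (DecidableEq (Sv i))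
  | .inr (.inl j) => inferInstanceAs (DecidableEq (Av j))
  | .inr (.inr k) => inferInstanceAs (DecidableEq (Sv k))

/-- The set of current-step coordinates. -/
def curSet (ns na : ℕ) : Finset (FVar ns na) :=
  (Finset.univ.image (Sum.inl : Fin ns → FVar ns na)) ∪
    (Finset.univ.image (fun j : Fin na => (Sum.inr (Sum.inl j) : FVar ns na)))

/-- A joint pmf `p` on (S, A, S') is consistent with the transition kernel `T`. -/
def FConsistent {ns na : ℕ} {Sv : Fin ns → Type} {Av : Fin na → Type}
    [∀ i, Fintype (Sv i)] [∀ j, Fintype (Av j)]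
    [∀ i, DecidableEq (Sv i)] [∀ j, DecidableEq (Av j)]
    (p : (∀ v, fv Sv Av v) → ℝ)
    (T : (∀ i, Sv i) → (∀ j, Av j) → (∀ k, Sv k) → ℝ) : Prop :=
  ∀ x, p x = marg p (curSet ns na) x *
    T (fun i => x (.inl i)) (fun j => x (.inr (.inl j))) (fun k => x (.inr (.inr k)))

/-- An undirected path in a directed graph: consecutive vertices joined by an edge
in either direction, with no repeated vertex. -/
def IsUndirPath {V : Type*} (E : V → V → Prop) (l : List V) : Prop :=
  l.Chain' (fun a b => E a b ∨ E b a) ∧ l.Nodup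

/-- A path is blocked by `Z`: it contains a chain or fork whose middle vertex is in `Z`,
or a collider such that neither the middle vertex nor any of its descendants is in `Z`. -/
def BlockedPath {V : Type*} (E : V → V → Prop) (Z : Set V) (l : List V) : Prop :=
  ∃ (l₁ l₂ : List V) (a b c : V), l = l₁ ++ a :: b :: c :: l₂ ∧
    ((((E a b ∧ E b c) ∨ (E c b ∧ E b a) ∨ (E b a ∧ E b c)) ∧ b ∈ Z) ∨
     ((E a b ∧ E c b) ∧ b ∉ Z ∧ ∀ d, Relation.TransGen E b d → d ∉ Z))

/-- `X` and `Y` are d-separated by `Z`: every undirected path from a vertex of `X`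
to a vertex of `Y` is blocked by `Z`. -/
def DSeparated {V : Type*} (E : V → V → Prop) (X Y Z : Set V) : Prop :=
  ∀ l : List V, IsUndirPath E l →
    (∃ u ∈ X, l.head? = some u) → (∃ w ∈ Y, l.getLast? = some w) →
    BlockedPath E Z l

/-- The graph is acyclic. -/
def Acyclic {V : Type*} (E : V → V → Prop) : Prop :=
  ∀ v, ¬ Relation.TransGen E v v

/-- `p` is faithful to the DAG: every conditional independence between disjoint sets
of variables is a d-separation. -/
def FaithfulTo {V : Type*} [Fintype V] [DecidableEq V] {val : V → Type*}
    [∀ v, Fintype (val v)] [∀ v, DecidableEq (val v)]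
    (p : (∀ v, val v) → ℝ) (E : V → V → Prop) : Prop :=
  ∀ X Y Z : Finset V, Disjoint X Y → Disjoint X Z → Disjoint Y Z →
    CondIndep p X Y Z → DSeparated E ↑X ↑Y ↑Z

/-- `p` is compatible with the DAG: it factorizes as the product over all variables of
the conditional probabilities given the graph parents. -/
def CompatibleWith {V : Type*} [Fintype V] [DecidableEq V] {val : V → Type*}
    [∀ v, Fintype (val v)] [∀ v, DecidableEq (val v)]
    (p : (∀ v, val v) → ℝ) (E : V → V → Prop) [DecidableRel E] : Prop :=
  ∀ x, p x = ∏ v, condP p v (Finset.univ.filter (fun u => E u v)) x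

/-- Current-step coordinates of an FMDP: state variables and action variables. -/
abbrev CurVar (ns na : ℕ) := Fin ns ⊕ Fin na

/-- Embedding of current-step coordinates into the full variable set. -/
def liftCur {ns na : ℕ} : CurVar ns na → FVar ns na :=
  Sum.elim Sum.inl (fun j => Sum.inr (Sum.inl j))

section aux

variable {V : Type*} [Fintype V] [DecidableEq V] {val : V → Type*}
    [∀ v, Fintype (val v)] [∀ v, DecidableEq (val v)]

lemma marg_congr (p : (∀ v, val v) → ℝ) {E : Finset V} {x y : ∀ v, val v}
    (h : ∀ v ∈ E, x v = y v) : marg p E x = marg p E y := by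
  unfold marg
  refine Finset.sum_congr rfl fun z _ => ?_
  refine if_congr ?_ rfl rfl
  constructor
  · intro hz v hv; rw [hz v hv, ← h v hv]
  · intro hz v hv; rw [hz v hv, h v hv]

lemma marg_pos (p : (∀ v, val v) → ℝ) (hpos : ∀ z, 0 < p z) (E : Finset V) (x : ∀ v, val v) :
    0 < marg p E x := by
  have h1 : (if ∀ v ∈ E, x v = x v then p x else 0) = p x := by simp
  calc (0:ℝ) < p x := hpos x
    _ ≤ _ := by
        rw [← h1]
        refine Finset.single_le_sum (f := fun y => if ∀ v ∈ E, y v = x v then p y else 0)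
          (fun y _ => ?_) (Finset.mem_univ x)
        split_ifs
        · exact (hpos _).le
        · exact le_refl _

lemma sum_marg_update (p : (∀ v, val v) → ℝ) {v : V} {P : Finset V} (hv : v ∉ P)
    (x : ∀ v, val v) :
    ∑ a : val v, marg p (insert v P) (Function.update x v a) = marg p P x := by
  unfold marg
  rw [Finset.sum_comm]
  refine Finset.sum_congr rfl fun y _ => ?_
  have key : ∀ a : val v, (∀ w ∈ insert v P, y w = Function.update x v a w) ↔
      (y v = a ∧ ∀ w ∈ P, y w = x w) := by
    intro a
    rw [Finset.forall_mem_insert]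
    constructor
    · rintro ⟨h1, h2⟩
      exact ⟨by simpa using h1, fun w hw => by
        rw [h2 w hw, Function.update_of_ne (by rintro rfl; exact hv hw)]⟩
    · rintro ⟨h1, h2⟩
      exact ⟨by simp [h1], fun w hw => by
        rw [h2 w hw, Function.update_of_ne (by rintro rfl; exact hv hw)]⟩
  simp_rw [key, ite_and]
  rw [Finset.sum_ite_eq univ (y v) (fun _ => if ∀ w ∈ P, y w = x w then p y else 0)]
  simp

lemma condP_congr (p : (∀ v, val v) → ℝ) {v : V} {P : Finset V} {x y : ∀ v, val v}
    (h : ∀ w ∈ insert v P, x w = y w) : condP p v P x = condP p v P y := by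
  unfold condP
  rw [marg_congr p h, marg_congr p (fun w hw => h w (Finset.mem_insert_of_mem hw))]

lemma sum_condP (p : (∀ v, val v) → ℝ) (hpos : ∀ z, 0 < p z) {v : V} {P : Finset V}
    (hv : v ∉ P) (x : ∀ v, val v) :
    ∑ a : val v, condP p v P (Function.update x v a) = 1 := by
  have hm : ∀ a, marg p P (Function.update x v a) = marg p P x := fun a =>
    marg_congr p (fun w hw => Function.update_of_ne (by rintro rfl; exact hv hw) _ _)
  simp_rw [condP, hm]
  rw [← Finset.sum_div, sum_marg_update p hv, div_self (marg_pos p hpos P x).ne']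


end aux


lemma iteAnd (A B : Prop) [Decidable A] [Decidable B] (r : ℝ) :
    (if A ∧ B then r else 0) = if B then (if A then r else 0) else 0 := by
  split_ifs <;> tauto

lemma ite_ite_comm' (A B : Prop) [Decidable A] [Decidable B] (r : ℝ) :
    (if A then if B then r else 0 else 0) = if B then (if A then r else 0) else 0 := by
  split_ifs <;> rfl

lemma sum_ite_const {α : Type*} [Fintype α] (P : Prop) [Decidable P] (R : α → ℝ) :
    ∑ a : α, (if P then R a else 0) = if P then ∑ a, R a else 0 := by
  split_ifs <;> simp

lemma sum_pi_prod {n : ℕ} {β : Fin n → Type*} [∀ j, Fintype (β j)] [∀ j, DecidableEq (β j)]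
    (F : ∀ j, β j → ℝ) (hF : ∀ j, ∑ a, F j a = 1) :
    ∑ s : ∀ j, β j, ∏ j, F j (s j) = 1 := by
  rw [← Fintype.prod_sum]
  simp [hF]

lemma sum_pi_prod_ite {n : ℕ} {β : Fin n → Type*} [∀ j, Fintype (β j)] [∀ j, DecidableEq (β j)]
    (F : ∀ j, β j → ℝ) (hF : ∀ j, ∑ a, F j a = 1) (k : Fin n) (b : β k) :
    ∑ s : ∀ j, β j, (if s k = b then ∏ j, F j (s j) else 0) = F k b := by
  have h1 : ∀ s : ∀ j, β j, (if s k = b then ∏ j, F j (s j) else 0)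
      = ∏ j, (if hj : k = j then (if s j = hj ▸ b then F j (s j) else 0) else F j (s j)) := by
    intro s
    by_cases h : s k = b
    · rw [if_pos h]
      refine Finset.prod_congr rfl fun j _ => ?_
      by_cases hj : k = j
      · subst hj; simp [h]
      · simp [hj]
    · rw [if_neg h]
      symm
      apply Finset.prod_eq_zero (Finset.mem_univ k)
      simp [h]
  simp_rw [h1]
  rw [← Fintype.prod_sum (fun j (a : β j) =>
    if hj : k = j then (if a = hj ▸ b then F j a else 0) else F j a)]
  have h2 : ∀ j, (∑ a : β j, if hj : k = j then (if a = hj ▸ b then F j a else 0) else F j a)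
      = if hj : k = j then F j (hj ▸ b) else 1 := by
    intro j
    by_cases hj : k = j
    · subst hj
      simp [Finset.sum_ite_eq' univ b (F k)]
    · simp [hj, hF j]
  simp_rw [h2]
  rw [Finset.prod_dite_eq]
  simp

section fmdp
variable {ns na : ℕ} {Sv : Fin ns → Type} {Av : Fin na → Type}
    [∀ i, Fintype (Sv i)] [∀ i, DecidableEq (Sv i)]
    [∀ j, Fintype (Av j)] [∀ j, DecidableEq (Av j)]

lemma mem_curSet_inl (i : Fin ns) : (Sum.inl i : FVar ns na) ∈ curSet ns na := by
  simp [curSet]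

lemma mem_curSet_inrl (j : Fin na) : (Sum.inr (Sum.inl j) : FVar ns na) ∈ curSet ns na := by
  simp [curSet]

lemma not_mem_curSet (k : Fin ns) : (Sum.inr (Sum.inr k) : FVar ns na) ∉ curSet ns na := by
  simp [curSet]

lemma liftCur_mem (u : CurVar ns na) : liftCur u ∈ curSet ns na := by
  cases u
  · exact mem_curSet_inl _
  · exact mem_curSet_inrl _

lemma liftCur_ne (u : CurVar ns na) (j : Fin ns) :
    liftCur u ≠ (Sum.inr (Sum.inr j) : FVar ns na) := by
  cases u <;> simp [liftCur]

/-- Merge a configuration's current-step coordinates with new next-step values. -/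
def merge (x : ∀ v, fv Sv Av v) (s : ∀ j, Sv j) : ∀ v, fv Sv Av v
  | .inl i => x (.inl i)
  | .inr (.inl j) => x (.inr (.inl j))
  | .inr (.inr k) => s k

lemma abstract_ci (p : (∀ v, fv Sv Av v) → ℝ)
    (u : CurVar ns na) (k : Fin ns)
    (g : (∀ v, fv Sv Av v) → ℝ) (f : Fin ns → (∀ v, fv Sv Av v) → ℝ)
    (hfactor : ∀ z, p z = g z * ∏ j, f j z)
    (gloc : ∀ z z', (∀ v ∈ curSet ns na, z v = z' v) → g z = g z')
    (floc : ∀ (j : Fin ns) (z z' : ∀ v, fv Sv Av v),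
      (∀ v ∈ insert (Sum.inr (Sum.inr j)) (curSet ns na), z v = z' v) → f j z = f j z')
    (fk_loc : ∀ z z', (∀ v, v ≠ liftCur u → z v = z' v) → f k z = f k z')
    (hfsum : ∀ (z : ∀ v, fv Sv Av v) (j : Fin ns),
      ∑ a : Sv j, f j (Function.update z (Sum.inr (Sum.inr j)) a) = 1) :
    CondIndep p {liftCur u} {(.inr (.inr k) : FVar ns na)}
      (curSet ns na \ {liftCur u}) := by
  classical
  intro x
  set Z : Finset (FVar ns na) := curSet ns na \ {liftCur u} with hZdef
  set m2 : fv Sv Av (liftCur u) → (∀ j, Sv j) → (∀ v, fv Sv Av v) :=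
    fun t s => Function.update (merge x s) (liftCur u) t with hm2def
  have hm2u : ∀ t s, m2 t s (liftCur u) = t := by
    intro t s; simp [hm2def]
  have hm2k : ∀ t s (j : Fin ns), m2 t s (Sum.inr (Sum.inr j)) = s j := by
    intro t s j
    simp only [hm2def]
    rw [Function.update_of_ne (Ne.symm (liftCur_ne u j))]
    rfl
  have hm2C : ∀ t s v, v ∈ curSet ns na → v ≠ liftCur u → m2 t s v = x v := by
    intro t s v hv hvu
    simp only [hm2def]
    rw [Function.update_of_ne hvu]
    match v, hv with
    | .inl i, _ => rfl
    | .inr (.inl j), _ => rfl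
    | .inr (.inr j), hv => exact absurd hv (not_mem_curSet j)
  have hround : ∀ y : ∀ v, fv Sv Av v, (∀ v ∈ Z, y v = x v) →
      m2 (y (liftCur u)) (fun j => y (Sum.inr (Sum.inr j))) = y := by
    intro y hy
    funext v
    cases v with
    | inl i =>
      by_cases hv : (Sum.inl i : FVar ns na) = liftCur u
      · rw [hv]; exact hm2u _ _
      · refine (hm2C _ _ _ (mem_curSet_inl i) hv).trans ?_
        exact (hy _ (by rw [hZdef, Finset.mem_sdiff, Finset.mem_singleton]; exact ⟨mem_curSet_inl i, hv⟩)).symm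
    | inr w =>
      cases w with
      | inl j =>
        by_cases hv : (Sum.inr (Sum.inl j) : FVar ns na) = liftCur u
        · rw [hv]; exact hm2u _ _
        · refine (hm2C _ _ _ (mem_curSet_inrl j) hv).trans ?_
          exact (hy _ (by rw [hZdef, Finset.mem_sdiff, Finset.mem_singleton]; exact ⟨mem_curSet_inrl j, hv⟩)).symm
      | inr j => exact hm2k _ _ j
  have hbij : ∀ h : (∀ v, fv Sv Av v) → ℝ,
      (∑ y : ∀ v, fv Sv Av v, if (∀ v ∈ Z, y v = x v) then h y else 0)
      = ∑ t : fv Sv Av (liftCur u), ∑ s : ∀ j, Sv j, h (m2 t s) := by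
    intro h
    rw [← Finset.sum_filter, ← Finset.sum_product' univ univ (fun t s => h (m2 t s))]
    refine Finset.sum_nbij'
      (fun y => ((y (liftCur u), fun j => y (Sum.inr (Sum.inr j))) :
        fv Sv Av (liftCur u) × ∀ j, Sv j))
      (fun q => m2 q.1 q.2) ?_ ?_ ?_ ?_ ?_
    · intro y _; exact Finset.mem_product.mpr ⟨Finset.mem_univ _, Finset.mem_univ _⟩
    · intro q _
      rw [Finset.mem_filter]
      refine ⟨Finset.mem_univ _, fun v hv => ?_⟩
      rw [hZdef, Finset.mem_sdiff, Finset.mem_singleton] at hv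
      exact hm2C _ _ v hv.1 hv.2
    · intro y hy
      rw [Finset.mem_filter] at hy
      exact hround y hy.2
    · intro q _
      exact Prod.ext (hm2u q.1 q.2) (funext fun j => hm2k q.1 q.2 j)
    · intro y hy
      rw [Finset.mem_filter] at hy
      exact (congrArg h (hround y hy.2)).symm
  set G : fv Sv Av (liftCur u) → ℝ :=
    fun t => g (Function.update x (liftCur u) t) with hGdef
  set Fj : fv Sv Av (liftCur u) → ∀ j : Fin ns, Sv j → ℝ :=
    fun t j a => f j (Function.update (Function.update x (liftCur u) t)
      (Sum.inr (Sum.inr j)) a) with hFdef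
  have hpm2 : ∀ t s, p (m2 t s) = G t * ∏ j, Fj t j (s j) := by
    intro t s
    rw [hfactor]
    congr 1
    · simp only [hGdef]
      refine gloc _ _ fun v hv => ?_
      by_cases hvu : v = liftCur u
      · subst hvu; rw [hm2u, Function.update_self]
      · rw [hm2C t s v hv hvu, Function.update_of_ne hvu]
    · refine Finset.prod_congr rfl fun j _ => ?_
      simp only [hFdef]
      refine floc j _ _ fun v hv => ?_
      rcases Finset.mem_insert.mp hv with hv | hv
      · subst hv; rw [hm2k]
        exact (Function.update_self (β := fv Sv Av) (Sum.inr (Sum.inr j)) (s j)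
          (Function.update x (liftCur u) t)).symm
      · by_cases hvj : v = (Sum.inr (Sum.inr j) : FVar ns na)
        · subst hvj; rw [hm2k]
          exact (Function.update_self (β := fv Sv Av) (Sum.inr (Sum.inr j)) (s j)
            (Function.update x (liftCur u) t)).symm
        · refine Eq.trans ?_ (Function.update_of_ne hvj _ _).symm
          by_cases hvu : v = liftCur u
          · subst hvu; rw [hm2u, Function.update_self]
          · rw [hm2C t s v hv hvu, Function.update_of_ne hvu]
  have hFsum : ∀ t (j : Fin ns), ∑ a : Sv j, Fj t j a = 1 := by
    intro t j
    simp only [hFdef]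
    exact hfsum _ j
  have hFconst : ∀ t a, Fj t k a = Fj (x (liftCur u)) k a := by
    intro t a
    simp only [hFdef]
    refine fk_loc _ _ fun v hv => ?_
    by_cases hvk : v = (Sum.inr (Sum.inr k) : FVar ns na)
    · subst hvk; exact (Function.update_self (β := fv Sv Av) _ _ _).trans
        (Function.update_self (β := fv Sv Av) (Sum.inr (Sum.inr k)) a
          (Function.update x (liftCur u) (x (liftCur u)))).symm
    · exact (Function.update_of_ne hvk _ _).trans (((Function.update_of_ne hv _ _).trans
        (Function.update_of_ne hv _ _).symm).trans (Function.update_of_ne hvk _ _).symm)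
  -- the four marginals
  have hmargZ : marg p Z x = ∑ t, G t := by
    unfold marg
    rw [hbij p]
    refine Finset.sum_congr rfl fun t _ => ?_
    simp_rw [hpm2]
    rw [← Finset.mul_sum, sum_pi_prod (Fj t) (hFsum t), mul_one]
  have hmargC : marg p (insert (liftCur u) Z) x = G (x (liftCur u)) := by
    unfold marg
    simp_rw [Finset.forall_mem_insert, iteAnd]
    have hb := hbij (fun y => if y (liftCur u) = x (liftCur u) then p y else 0)
    rw [hb]
    simp_rw [hm2u, sum_ite_const]
    rw [Finset.sum_ite_eq' univ (x (liftCur u))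
      (fun t => ∑ s : ∀ j, Sv j, p (m2 t s))]
    simp only [Finset.mem_univ, if_true]
    simp_rw [hpm2]
    rw [← Finset.mul_sum, sum_pi_prod (Fj (x (liftCur u))) (hFsum _), mul_one]
  have hmargYZ : marg p (insert (Sum.inr (Sum.inr k)) Z) x
      = ∑ t, G t * Fj t k (x (Sum.inr (Sum.inr k))) := by
    unfold marg
    simp_rw [Finset.forall_mem_insert, iteAnd]
    have hb := hbij (fun y =>
      if y (Sum.inr (Sum.inr k)) = x (Sum.inr (Sum.inr k)) then p y else 0)
    rw [hb]
    refine Finset.sum_congr rfl fun t _ => ?_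
    simp_rw [hm2k, hpm2]
    calc ∑ s : ∀ j, Sv j, (if s k = x (Sum.inr (Sum.inr k)) then
            G t * ∏ j, Fj t j (s j) else 0)
        = ∑ s : ∀ j, Sv j, G t * (if s k = x (Sum.inr (Sum.inr k)) then
            ∏ j, Fj t j (s j) else 0) := by
          refine Finset.sum_congr rfl fun s _ => ?_
          split_ifs <;> ring
      _ = G t * Fj t k (x (Sum.inr (Sum.inr k))) := by
          rw [← Finset.mul_sum]
          congr 1
          convert sum_pi_prod_ite (Fj t) (hFsum t) k (x (Sum.inr (Sum.inr k)))
  have hmargCk : marg p (insert (liftCur u) (insert (Sum.inr (Sum.inr k)) Z)) x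
      = G (x (liftCur u)) * Fj (x (liftCur u)) k (x (Sum.inr (Sum.inr k))) := by
    unfold marg
    simp_rw [Finset.forall_mem_insert, iteAnd]
    have hb := hbij (fun y =>
      if y (Sum.inr (Sum.inr k)) = x (Sum.inr (Sum.inr k)) then
        (if y (liftCur u) = x (liftCur u) then p y else 0) else 0)
    rw [hb]
    simp_rw [hm2u, hm2k, ite_ite_comm', sum_ite_const]
    rw [Finset.sum_ite_eq' univ (x (liftCur u))]
    simp only [Finset.mem_univ, if_true]
    simp_rw [hpm2]
    calc ∑ s : ∀ j, Sv j, (if s k = x (Sum.inr (Sum.inr k)) then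
            G (x (liftCur u)) * ∏ j, Fj (x (liftCur u)) j (s j) else 0)
        = ∑ s : ∀ j, Sv j, G (x (liftCur u)) * (if s k = x (Sum.inr (Sum.inr k)) then
            ∏ j, Fj (x (liftCur u)) j (s j) else 0) := by
          refine Finset.sum_congr rfl fun s _ => ?_
          split_ifs <;> ring
      _ = G (x (liftCur u)) * Fj (x (liftCur u)) k (x (Sum.inr (Sum.inr k))) := by
          rw [← Finset.mul_sum]
          congr 1
          convert (sum_pi_prod_ite (Fj (x (liftCur u))) (hFsum _) k (x (Sum.inr (Sum.inr k))))
  have hsets1 : ({liftCur u} ∪ {(Sum.inr (Sum.inr k) : FVar ns na)} ∪ Z)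
      = insert (liftCur u) (insert (Sum.inr (Sum.inr k)) Z) := by
    rw [← Finset.insert_eq, Finset.insert_union, ← Finset.insert_eq]
  have hsets2 : ({liftCur u} : Finset (FVar ns na)) ∪ Z = insert (liftCur u) Z :=
    (Finset.insert_eq _ _).symm
  have hsets3 : ({(Sum.inr (Sum.inr k) : FVar ns na)} : Finset (FVar ns na)) ∪ Z
      = insert (Sum.inr (Sum.inr k)) Z := (Finset.insert_eq _ _).symm
  rw [hsets1, hsets2, hsets3, hmargCk, hmargZ, hmargC, hmargYZ]
  have hlast : ∑ t, G t * Fj t k (x (Sum.inr (Sum.inr k)))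
      = (∑ t, G t) * Fj (x (liftCur u)) k (x (Sum.inr (Sum.inr k))) := by
    rw [Finset.sum_mul]
    exact Finset.sum_congr rfl fun t _ => by exact congrArg (G t * ·) (hFconst t _)
  rw [hlast]
  ring

end fmdp

/-- Let `G` be a DAG on (S, A, S') in which every next-step vertex has all
its parents among the current-step vertices and has no children (in particular no
current-step vertex has a next-step parent).  If a full-support pmf is compatible with and
faithful to `G`, then a current-step vertex is a parent of a next-step vertex iff the
corresponding conditional independence given all remaining current-step vertices fails. -/
theorem bipartite_faithful_dag_edges_iff_ci_fails
    {ns na : ℕ} (Sv : Fin ns → Type) (Av : Fin na → Type)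
    [∀ i, Fintype (Sv i)] [∀ i, DecidableEq (Sv i)] [∀ i, Nonempty (Sv i)]
    [∀ j, Fintype (Av j)] [∀ j, DecidableEq (Av j)] [∀ j, Nonempty (Av j)]
    (E : FVar ns na → FVar ns na → Prop) [DecidableRel E]
    (hacyc : Acyclic E)
    -- parents of next-step vertices lie among the current-step vertices
    (hpar : ∀ (k : Fin ns) (v : FVar ns na), E v (.inr (.inr k)) →
      (∃ i : Fin ns, v = .inl i) ∨ (∃ j : Fin na, v = .inr (.inl j)))
    -- next-step vertices have no children
    (hnochild : ∀ (k : Fin ns) (v : FVar ns na), ¬ E (.inr (.inr k)) v)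
    (p : (∀ v, fv Sv Av v) → ℝ)
    (hpos : ∀ x, 0 < p x) (hsum : ∑ x, p x = 1)
    (hcompat : CompatibleWith p E) (hfaith : FaithfulTo p E) :
    ∀ (u : CurVar ns na) (k : Fin ns),
      E (liftCur u) (.inr (.inr k)) ↔
      ¬ CondIndep p {liftCur u} {(.inr (.inr k) : FVar ns na)}
        (curSet ns na \ {liftCur u}) := by
  intro u k
  have hpaC : ∀ w v : FVar ns na, E w v → w ∈ curSet ns na := by
    intro w v hw
    match w with
    | .inl i => exact mem_curSet_inl i
    | .inr (.inl j) => exact mem_curSet_inrl j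
    | .inr (.inr kk) => exact absurd hw (hnochild kk v)
  constructor
  · intro hE hCI
    have hdisj1 : Disjoint ({liftCur u} : Finset (FVar ns na))
        {(Sum.inr (Sum.inr k) : FVar ns na)} := by
      rw [Finset.disjoint_singleton_left, Finset.mem_singleton]
      exact liftCur_ne u k
    have hdisj2 : Disjoint ({liftCur u} : Finset (FVar ns na))
        (curSet ns na \ {liftCur u}) := by
      rw [Finset.disjoint_singleton_left, Finset.mem_sdiff]
      exact fun h => h.2 (Finset.mem_singleton_self _)
    have hdisj3 : Disjoint ({(Sum.inr (Sum.inr k) : FVar ns na)} : Finset (FVar ns na))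
        (curSet ns na \ {liftCur u}) := by
      rw [Finset.disjoint_singleton_left, Finset.mem_sdiff]
      exact fun h => not_mem_curSet k h.1
    have hd := hfaith _ _ _ hdisj1 hdisj2 hdisj3 hCI
    have hpath : IsUndirPath E [liftCur u, Sum.inr (Sum.inr k)] := by
      constructor
      · exact List.isChain_cons_cons.mpr ⟨Or.inl hE, List.isChain_singleton _⟩
      · simp [liftCur_ne u k]
    have hb := hd _ hpath ⟨liftCur u, by simp, rfl⟩
      ⟨Sum.inr (Sum.inr k), by simp, by simp⟩
    obtain ⟨l₁, l₂, a, b, c, hl, -⟩ := hb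
    have hlen := congrArg List.length hl
    simp [List.length_append] at hlen
    omega
  · intro h
    by_contra hnE
    apply h
    refine abstract_ci p u k
      (fun z => (∏ i, condP p (Sum.inl i) (Finset.univ.filter (fun w => E w (Sum.inl i))) z) *
        ∏ j, condP p (Sum.inr (Sum.inl j)) (Finset.univ.filter (fun w => E w (Sum.inr (Sum.inl j)))) z)
      (fun j z => condP p (Sum.inr (Sum.inr j)) (Finset.univ.filter (fun w => E w (Sum.inr (Sum.inr j)))) z)
      ?_ ?_ ?_ ?_ ?_
    · intro z
      rw [hcompat z, Fintype.prod_sum_type, Fintype.prod_sum_type, ← mul_assoc]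
    · intro z z' hzz
      refine congrArg₂ (· * ·)
        (Finset.prod_congr rfl fun i _ => condP_congr p fun w hw => ?_)
        (Finset.prod_congr rfl fun j _ => condP_congr p fun w hw => ?_)
      · rcases Finset.mem_insert.mp hw with rfl | hw
        · exact hzz _ (mem_curSet_inl i)
        · exact hzz _ (hpaC w _ (Finset.mem_filter.mp hw).2)
      · rcases Finset.mem_insert.mp hw with rfl | hw
        · exact hzz _ (mem_curSet_inrl j)
        · exact hzz _ (hpaC w _ (Finset.mem_filter.mp hw).2)
    · intro j z z' hzz
      refine condP_congr p fun w hw => ?_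
      rcases Finset.mem_insert.mp hw with rfl | hw
      · exact hzz _ (Finset.mem_insert_self _ _)
      · exact hzz _ (Finset.mem_insert_of_mem (hpaC w _ (Finset.mem_filter.mp hw).2))
    · intro z z' hzz
      refine condP_congr p fun w hw => ?_
      rcases Finset.mem_insert.mp hw with rfl | hw
      · exact hzz _ (Ne.symm (liftCur_ne u k))
      · refine hzz _ fun heq => ?_
        exact hnE (heq ▸ (Finset.mem_filter.mp hw).2)
    · intro z j
      have hnm : (Sum.inr (Sum.inr j) : FVar ns na) ∉
          Finset.univ.filter (fun w => E w (Sum.inr (Sum.inr j))) := by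
        simp only [Finset.mem_filter]
        exact fun hmem => hnochild j _ hmem.2
      exact sum_condP p hpos hnm z
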